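/- Let κ be an uncountable cardinal with κ^{<κ} = κ and let P be a partially ordered set of cardinality κ that is κ-universal (every partial order of cardinality strictly less than κ embeds into P as a suborder) and κ-ultrahomogeneous (every order isomorphism between two subsets of P of cardinality strictly less than κ, each with the induced partial order, extends to an automorphism of P). Then Aut(P) is not universal: there exists a subset A ⊆ P such that there is no injective continuous group homomorphism from the automorphism group of the induced partial order on A into Aut(P). -/

import Mathlib

/-- The topology of pointwise convergence on the permutation group of a set `V`
(regarded as a discrete space): the topology induced from the product topology
on `V → V` where `V` carries the discrete topology. -/
instance permPointwiseTopology (V : Type*) : TopologicalSpace (Equiv.Perm V) :=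
  TopologicalSpace.induced (fun g : Equiv.Perm V => (g : V → V))
    (@Pi.topologicalSpace V (fun _ => V) (fun _ => ⊥))

/-- The automorphism group of a binary relational structure `(V, r)`, realized as the
subgroup of `Equiv.Perm V` of permutations preserving the relation `r` in both directions. -/
def relAut {V : Type*} (r : V → V → Prop) : Subgroup (Equiv.Perm V) where
  carrier := {g : Equiv.Perm V | ∀ x y : V, r (g x) (g y) ↔ r x y}
  one_mem' := fun _ _ => Iff.rfl
  mul_mem' := by
    intro a b ha hb x y
    exact (ha (b x) (b y)).trans (hb x y)
  inv_mem' := by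
    intro a ha x y
    have h := (ha (a⁻¹ x) (a⁻¹ y)).symm
    simpa using h

universe u

namespace NUA

open Cardinal



/-- `ℕ` with the discrete (equality) partial order, lifted to universe `u`. -/
def DOrd : Type u := ULift ℕ

instance : PartialOrder (DOrd.{u}) where
  le := Eq
  le_refl _ := rfl
  le_trans _ _ _ h1 h2 := Eq.trans h1 h2
  le_antisymm _ _ h _ := h

lemma DOrd.le_iff (a b : DOrd.{u}) : a ≤ b ↔ a = b := ⟨fun h => h, fun h => h⟩

lemma DOrd.mk_eq : #(DOrd.{u}) = Cardinal.aleph0 :=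
  Cardinal.mk_denumerable (ULift ℕ)

variable {P : Type u} [PartialOrder P] {κ : Cardinal.{u}}

/-- `Option ↥X` order for the downward realization: the new point `none` lies
below exactly (the images of) `U`, and above nothing. -/
def odle (X U : Set P) : Option ↥X → Option ↥X → Prop
  | some a, some b => (a : P) ≤ (b : P)
  | none, some b => (b : P) ∈ U
  | some _, none => False
  | none, none => True

def odOrder (X U : Set P)
    (hupc : ∀ x ∈ U, ∀ y ∈ X, x ≤ y → y ∈ U) : PartialOrder (Option ↥X) where
  le := odle X U
  lt o₁ o₂ := odle X U o₁ o₂ ∧ ¬ odle X U o₂ o₁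
  lt_iff_le_not_ge _ _ := Iff.rfl
  le_refl o := by cases o with
    | none => exact trivial
    | some a => exact le_refl (a : P)
  le_trans o₁ o₂ o₃ h1 h2 := by
    cases o₁ with
    | none => cases o₂ with
      | none => cases o₃ with
        | none => exact trivial
        | some c => exact h2
      | some b => cases o₃ with
        | none => exact (h2 : False).elim
        | some c => exact hupc _ h1 _ c.2 h2
    | some a => cases o₂ with
      | none => exact (h1 : False).elim
      | some b => cases o₃ with
        | none => exact (h2 : False).elim
        | some c => exact le_trans (h1 : (a : P) ≤ (b : P)) h2
  le_antisymm o₁ o₂ h1 h2 := by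
    cases o₁ with
    | none => cases o₂ with
      | none => rfl
      | some b => exact (h2 : False).elim
    | some a => cases o₂ with
      | none => exact (h1 : False).elim
      | some b => exact congrArg some (Subtype.ext (le_antisymm h1 h2))

/-- Realization lemma, downward version. -/
lemma rdown
    (hκ : Cardinal.aleph0 < κ)
    (huniv : ∀ (Y : Type u) [PartialOrder Y], #Y < κ → Nonempty (Y ↪o P))
    (hhom : ∀ A B : Set P, #A < κ → #B < κ → ∀ f : A ≃o B,
      ∃ g : P ≃o P, ∀ a : A, g (a : P) = (f a : P))
    (X U : Set P) (hX : #X < κ)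
    (hupc : ∀ x ∈ U, ∀ y ∈ X, x ≤ y → y ∈ U) :
    ∃ z : P, ∀ x, x ∈ X → (z ≤ x ↔ x ∈ U) ∧ ¬ (x ≤ z) := by
  classical
  letI instY : PartialOrder (Option ↥X) := odOrder X U hupc
  have hcard : #(Option ↥X) < κ := by
    rw [Cardinal.mk_option]
    exact Cardinal.add_lt_of_lt hκ.le hX (lt_trans Cardinal.one_lt_aleph0 hκ)
  obtain ⟨j2⟩ := huniv (Option ↥X) hcard
  set φ : ↥X → P := fun a => j2 (some a) with hφdef
  have φinj : Function.Injective φ := by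
    intro a b h
    have h2 := j2.injective h
    exact Option.some_injective _ h2
  have hA' : #(Set.range φ) < κ := by
    rw [Cardinal.mk_range_eq φ φinj]; exact hX
  have hmono : ∀ a b : ↥X, φ a ≤ φ b ↔ (a : P) ≤ (b : P) := by
    intro a b
    exact j2.le_iff_le
  let eqv : ↥X ≃ ↥(Set.range φ) :=
    Equiv.ofBijective (fun a => ⟨φ a, Set.mem_range_self a⟩)
      ⟨fun a b h => φinj (congrArg Subtype.val h), by
        rintro ⟨_, a, rfl⟩; exact ⟨a, rfl⟩⟩
  let fIso : ↥X ≃o ↥(Set.range φ) :=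
  { toEquiv := eqv
    map_rel_iff' := by
      intro a b
      show (⟨φ a, _⟩ : ↥(Set.range φ)) ≤ ⟨φ b, _⟩ ↔ a ≤ b
      rw [Subtype.mk_le_mk]
      exact hmono a b }
  obtain ⟨g, hg⟩ := hhom (Set.range φ) X hA' hX fIso.symm
  refine ⟨g (j2 none), ?_⟩
  intro x hx
  have key : g (φ ⟨x, hx⟩) = x := by
    have h1 := hg ⟨φ ⟨x, hx⟩, Set.mem_range_self _⟩
    have h2 : fIso.symm ⟨φ ⟨x, hx⟩, Set.mem_range_self _⟩ = ⟨x, hx⟩ := by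
      have h3 : (⟨φ ⟨x, hx⟩, Set.mem_range_self _⟩ : ↥(Set.range φ)) = fIso ⟨x, hx⟩ := rfl
      rw [h3, OrderIso.symm_apply_apply]
    rw [h2] at h1
    exact h1
  have hiff : ∀ o₁ o₂ : Option ↥X, g (j2 o₁) ≤ g (j2 o₂) ↔ @LE.le _ instY.toLE o₁ o₂ := by
    intro o₁ o₂
    rw [g.le_iff_le, j2.le_iff_le]
  constructor
  · have := hiff none (some ⟨x, hx⟩)
    rw [show j2 (some ⟨x,hx⟩) = φ ⟨x,hx⟩ from rfl, key] at this
    exact this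
  · intro hle
    have := (hiff (some ⟨x, hx⟩) none).mp
      (by rw [show j2 (some ⟨x,hx⟩) = φ ⟨x,hx⟩ from rfl, key]; exact hle)
    exact this

/-- `Option ↥X` order for the upward realization: the new point `none` lies
above exactly (the images of) `L`, and below nothing. -/
def oule (X L : Set P) : Option ↥X → Option ↥X → Prop
  | some a, some b => (a : P) ≤ (b : P)
  | some a, none => (a : P) ∈ L
  | none, some _ => False
  | none, none => True

def ouOrder (X L : Set P)
    (hdnc : ∀ x ∈ L, ∀ y ∈ X, y ≤ x → y ∈ L) : PartialOrder (Option ↥X) where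
  le := oule X L
  lt o₁ o₂ := oule X L o₁ o₂ ∧ ¬ oule X L o₂ o₁
  lt_iff_le_not_ge _ _ := Iff.rfl
  le_refl o := by cases o with
    | none => exact trivial
    | some a => exact le_refl (a : P)
  le_trans o₁ o₂ o₃ h1 h2 := by
    cases o₁ with
    | none => cases o₂ with
      | none => cases o₃ with
        | none => exact trivial
        | some c => exact (h2 : False).elim
      | some b => exact (h1 : False).elim
    | some a => cases o₂ with
      | none => cases o₃ with
        | none => exact h1
        | some c => exact (h2 : False).elim
      | some b => cases o₃ with
        | none => exact hdnc _ h2 _ a.2 h1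
        | some c => exact le_trans (h1 : (a : P) ≤ (b : P)) h2
  le_antisymm o₁ o₂ h1 h2 := by
    cases o₁ with
    | none => cases o₂ with
      | none => rfl
      | some b => exact (h1 : False).elim
    | some a => cases o₂ with
      | none => exact (h2 : False).elim
      | some b => exact congrArg some (Subtype.ext (le_antisymm h1 h2))

/-- Realization lemma, upward version. -/
lemma rup
    (hκ : Cardinal.aleph0 < κ)
    (huniv : ∀ (Y : Type u) [PartialOrder Y], #Y < κ → Nonempty (Y ↪o P))
    (hhom : ∀ A B : Set P, #A < κ → #B < κ → ∀ f : A ≃o B,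
      ∃ g : P ≃o P, ∀ a : A, g (a : P) = (f a : P))
    (X L : Set P) (hX : #X < κ)
    (hdnc : ∀ x ∈ L, ∀ y ∈ X, y ≤ x → y ∈ L) :
    ∃ z : P, ∀ x, x ∈ X → (x ≤ z ↔ x ∈ L) ∧ ¬ (z ≤ x) := by
  classical
  letI instY : PartialOrder (Option ↥X) := ouOrder X L hdnc
  have hcard : #(Option ↥X) < κ := by
    rw [Cardinal.mk_option]
    exact Cardinal.add_lt_of_lt hκ.le hX (lt_trans Cardinal.one_lt_aleph0 hκ)
  obtain ⟨j2⟩ := huniv (Option ↥X) hcard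
  set φ : ↥X → P := fun a => j2 (some a) with hφdef
  have φinj : Function.Injective φ := by
    intro a b h
    have h2 := j2.injective h
    exact Option.some_injective _ h2
  have hA' : #(Set.range φ) < κ := by
    rw [Cardinal.mk_range_eq φ φinj]; exact hX
  have hmono : ∀ a b : ↥X, φ a ≤ φ b ↔ (a : P) ≤ (b : P) := by
    intro a b
    exact j2.le_iff_le
  let eqv : ↥X ≃ ↥(Set.range φ) :=
    Equiv.ofBijective (fun a => ⟨φ a, Set.mem_range_self a⟩)
      ⟨fun a b h => φinj (congrArg Subtype.val h), by
        rintro ⟨_, a, rfl⟩; exact ⟨a, rfl⟩⟩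
  let fIso : ↥X ≃o ↥(Set.range φ) :=
  { toEquiv := eqv
    map_rel_iff' := by
      intro a b
      show (⟨φ a, _⟩ : ↥(Set.range φ)) ≤ ⟨φ b, _⟩ ↔ a ≤ b
      rw [Subtype.mk_le_mk]
      exact hmono a b }
  obtain ⟨g, hg⟩ := hhom (Set.range φ) X hA' hX fIso.symm
  refine ⟨g (j2 none), ?_⟩
  intro x hx
  have key : g (φ ⟨x, hx⟩) = x := by
    have h1 := hg ⟨φ ⟨x, hx⟩, Set.mem_range_self _⟩
    have h2 : fIso.symm ⟨φ ⟨x, hx⟩, Set.mem_range_self _⟩ = ⟨x, hx⟩ := by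
      have h3 : (⟨φ ⟨x, hx⟩, Set.mem_range_self _⟩ : ↥(Set.range φ)) = fIso ⟨x, hx⟩ := rfl
      rw [h3, OrderIso.symm_apply_apply]
    rw [h2] at h1
    exact h1
  have hiff : ∀ o₁ o₂ : Option ↥X, g (j2 o₁) ≤ g (j2 o₂) ↔ @LE.le _ instY.toLE o₁ o₂ := by
    intro o₁ o₂
    rw [g.le_iff_le, j2.le_iff_le]
  constructor
  · have := hiff (some ⟨x, hx⟩) none
    rw [show j2 (some ⟨x,hx⟩) = φ ⟨x,hx⟩ from rfl, key] at this
    exact this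
  · intro hle
    have := (hiff none (some ⟨x, hx⟩)).mp
      (by rw [show j2 (some ⟨x,hx⟩) = φ ⟨x,hx⟩ from rfl, key]; exact hle)
    exact this

/-- Iteratively build a list by appending a step function of the index and current list. -/
noncomputable def seqP {Q : Type u} (step : ℕ → List Q → Q) : ℕ → List Q
  | 0 => []
  | n+1 => seqP step n ++ [step n (seqP step n)]

lemma seqP_succ {Q : Type u} (step : ℕ → List Q → Q) (n : ℕ) :
    seqP step (n+1) = seqP step n ++ [step n (seqP step n)] := rfl

lemma seqP_len {Q : Type u} (step : ℕ → List Q → Q) : ∀ n, (seqP step n).length = n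
  | 0 => rfl
  | n+1 => by
      rw [seqP_succ, List.length_append, seqP_len step n]; rfl

lemma seqP_prefix {Q : Type u} (step : ℕ → List Q → Q) :
    ∀ {m n : ℕ}, m ≤ n → seqP step m <+: seqP step n := by
  intro m n h
  induction n with
  | zero =>
      have : m = 0 := Nat.le_zero.mp h
      subst this; exact List.prefix_refl _
  | succ k ih =>
      rcases Nat.lt_or_ge m (k+1) with h1 | h2
      · refine (ih (Nat.lt_succ_iff.mp h1)).trans ?_
        rw [seqP_succ]
        exact List.prefix_append _ _
      · have : m = k+1 := le_antisymm h h2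
        subst this; exact List.prefix_refl _

end NUA

open Cardinal in
/-- Let `κ` be an uncountable cardinal with `κ^{<κ} = κ` and let `P` be a partial order of
cardinality `κ` which is `κ`-universal (every partial order of cardinality `< κ` embeds into
`P` as a suborder) and `κ`-ultrahomogeneous (every order isomorphism between two subsets of
cardinality `< κ`, with the induced partial orders, extends to an automorphism of `P`).
Then `Aut(P)` is not universal: there is a subset `A ⊆ P` such that there is no injective
continuous group homomorphism from the automorphism group of the induced partial order on
`A` into `Aut(P)` (both with the pointwise convergence topology). -/
theorem randomPartialOrderAut_not_universal
    {P : Type u} [PartialOrder P] (κ : Cardinal.{u})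
    (hκ : Cardinal.aleph0 < κ) (hpow : κ ^< κ = κ)
    (hcard : #P = κ)
    (huniv : ∀ (Y : Type u) [PartialOrder Y], #Y < κ → Nonempty (Y ↪o P))
    (hhom : ∀ A B : Set P, #A < κ → #B < κ → ∀ f : A ≃o B,
      ∃ g : P ≃o P, ∀ a : A, g (a : P) = (f a : P)) :
    ∃ A : Set P,
      ¬ ∃ e : relAut (fun a b : A => (a : P) ≤ b) →* relAut (fun a b : P => a ≤ b),
          Function.Injective e ∧ Continuous e := by
  classical
  obtain ⟨emb⟩ := huniv NUA.DOrd (by rw [NUA.DOrd.mk_eq]; exact hκ)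
  set A₀ : Set P := Set.range ⇑emb with hA₀def
  refine ⟨A₀, ?_⟩
  rintro ⟨e, einj, econt⟩
  -- indexed elements of the antichain
  have hmem : ∀ n : ℕ, emb (ULift.up n) ∈ A₀ := fun n => ⟨ULift.up n, rfl⟩
  set xh : ℕ → ↥A₀ := fun n => ⟨emb (ULift.up n), hmem n⟩ with hxhdef
  have xhinj : Function.Injective xh := by
    intro m n h
    have h2 : emb (ULift.up m) = emb (ULift.up n) := congrArg Subtype.val h
    have h3 := emb.injective h2
    exact congrArg ULift.down h3
  -- A₀ is an antichain
  have hanti : ∀ a b : ↥A₀, ((a : P) ≤ (b : P)) ↔ a = b := by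
    rintro ⟨_, da, rfl⟩ ⟨_, db, rfl⟩
    constructor
    · intro h
      have h2 : da ≤ db := emb.le_iff_le.mp h
      have h3 : da = db := (NUA.DOrd.le_iff da db).mp h2
      exact Subtype.ext (congrArg emb h3)
    · intro h
      have h2 : emb da = emb db := congrArg Subtype.val h
      exact le_of_eq h2
  -- every permutation of A₀ is an automorphism
  have memG : ∀ σ : Equiv.Perm ↥A₀, σ ∈ relAut (fun a b : ↥A₀ => (a : P) ≤ (b : P)) := by
    intro σ x y
    show ((σ x : P) ≤ (σ y : P)) ↔ ((x : P) ≤ (y : P))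
    rw [hanti, hanti]
    exact ⟨fun h => σ.injective h, fun h => congrArg σ h⟩
  -- the transpositions
  set τ : ℕ → ↥(relAut (fun a b : ↥A₀ => (a : P) ≤ (b : P))) :=
    fun k => ⟨Equiv.swap (xh (2*k)) (xh (2*k+1)), memG _⟩ with hτdef
  -- their images acting on P
  set Hm : ℕ → P → P := fun k p => ((e (τ k) : ↥(relAut (fun a b : P => a ≤ b))) : Equiv.Perm P) p
    with hHmdef
  have hmono : ∀ (k : ℕ) (x y : P), Hm k x ≤ Hm k y ↔ x ≤ y := by
    intro k x y
    exact (e (τ k)).2 x y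
  have hτ2 : ∀ k, τ k * τ k = 1 := by
    intro k
    apply Subtype.ext
    show Equiv.swap (xh (2*k)) (xh (2*k+1)) * Equiv.swap (xh (2*k)) (xh (2*k+1)) = 1
    exact Equiv.swap_mul_self _ _
  have hinvol : ∀ (k : ℕ) (p : P), Hm k (Hm k p) = p := by
    intro k p
    have h1 : e (τ k) * e (τ k) = 1 := by rw [← map_mul, hτ2, map_one]
    show ((e (τ k) : ↥(relAut (fun a b : P => a ≤ b))) : Equiv.Perm P)
      (((e (τ k) : ↥(relAut (fun a b : P => a ≤ b))) : Equiv.Perm P) p) = p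
    rw [← Equiv.Perm.mul_apply]
    rw [show ((e (τ k) : ↥(relAut (fun a b : P => a ≤ b))) : Equiv.Perm P) *
        ((e (τ k) : ↥(relAut (fun a b : P => a ≤ b))) : Equiv.Perm P)
        = ((e (τ k) * e (τ k) : ↥(relAut (fun a b : P => a ≤ b))) : Equiv.Perm P) from rfl]
    rw [h1]
    rfl
  have hmoved : ∀ k, ∃ p : P, Hm k p ≠ p := by
    intro k
    by_contra hc
    push_neg at hc
    have h1 : ((e (τ k) : ↥(relAut (fun a b : P => a ≤ b))) : Equiv.Perm P) = 1 := by
      apply Equiv.ext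
      intro p
      exact hc p
    have h2 : e (τ k) = 1 := Subtype.ext h1
    have h3 : τ k = 1 := einj (by rw [h2, map_one])
    have h4 : Equiv.swap (xh (2*k)) (xh (2*k+1)) = 1 := congrArg Subtype.val h3
    have h5 : xh (2*k+1) = xh (2*k) := by
      have := Equiv.swap_apply_left (xh (2*k)) (xh (2*k+1))
      rw [h4] at this
      exact this.symm
    have h6 := xhinj h5
    omega
  -- continuity at the identity: finitely many coordinates determine fixing a point
  have cont0 : ∀ z : P, ∃ uF : Finset ↥A₀,
      ∀ t : ↥(relAut (fun a b : ↥A₀ => (a : P) ≤ (b : P))),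
        (∀ a ∈ uF, (t : Equiv.Perm ↥A₀) a = a) →
        ((e t : ↥(relAut (fun a b : P => a ≤ b))) : Equiv.Perm P) z = z := by
    intro z
    letI tP : TopologicalSpace P := ⊥
    haveI hdP : DiscreteTopology P := ⟨rfl⟩
    have hcont2 : Continuous (fun h : ↥(relAut (fun a b : P => a ≤ b)) =>
        ((h : Equiv.Perm P) : P → P) z) :=
      (continuous_apply z).comp (continuous_induced_dom.comp continuous_subtype_val)
    have hopen : IsOpen {t : ↥(relAut (fun a b : ↥A₀ => (a : P) ≤ (b : P))) |
        ((e t : ↥(relAut (fun a b : P => a ≤ b))) : Equiv.Perm P) z = z} := by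
      have h0 : IsOpen {h : ↥(relAut (fun a b : P => a ≤ b)) | ((h : Equiv.Perm P)) z = z} := by
        have heq : {h : ↥(relAut (fun a b : P => a ≤ b)) | ((h : Equiv.Perm P)) z = z}
            = (fun h : ↥(relAut (fun a b : P => a ≤ b)) => ((h : Equiv.Perm P) : P → P) z) ⁻¹' {z} := rfl
        rw [heq]
        exact hcont2.isOpen_preimage {z} (isOpen_discrete {z})
      exact h0.preimage econt
    obtain ⟨s1, hs1, hs1eq⟩ :=
      (@isOpen_induced_iff (↥(relAut (fun a b : ↥A₀ => (a : P) ≤ (b : P))))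
        (Equiv.Perm ↥A₀) (permPointwiseTopology ↥A₀) _ Subtype.val).mp hopen
    obtain ⟨s2, hs2, hs2eq⟩ :=
      (@isOpen_induced_iff (Equiv.Perm ↥A₀) (↥A₀ → ↥A₀)
        (@Pi.topologicalSpace ↥A₀ (fun _ => ↥A₀) (fun _ => ⊥)) _
        (fun g : Equiv.Perm ↥A₀ => (g : ↥A₀ → ↥A₀))).mp hs1
    letI tA : TopologicalSpace ↥A₀ := ⊥
    have h1mem : ((1 : Equiv.Perm ↥A₀) : ↥A₀ → ↥A₀) ∈ s2 := by
      have m0 : (1 : ↥(relAut (fun a b : ↥A₀ => (a : P) ≤ (b : P)))) ∈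
          {t : ↥(relAut (fun a b : ↥A₀ => (a : P) ≤ (b : P))) |
            ((e t : ↥(relAut (fun a b : P => a ≤ b))) : Equiv.Perm P) z = z} := by
        show ((e 1 : ↥(relAut (fun a b : P => a ≤ b))) : Equiv.Perm P) z = z
        rw [map_one]
        rfl
      rw [← hs1eq] at m0
      rw [← hs2eq] at m0
      exact m0
    obtain ⟨I, uu, huu, hsub⟩ := (isOpen_pi_iff.mp hs2) _ h1mem
    refine ⟨I, ?_⟩
    intro t ht
    have h2 : ((t : Equiv.Perm ↥A₀) : ↥A₀ → ↥A₀) ∈ s2 := by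
      apply hsub
      intro i hi
      have h3 : (t : Equiv.Perm ↥A₀) i = i := ht i hi
      show ((t : Equiv.Perm ↥A₀) : ↥A₀ → ↥A₀) i ∈ uu i
      rw [h3]
      have := (huu i hi).2
      exact this
    have h4 : (t : Equiv.Perm ↥A₀) ∈ s1 := by rw [← hs2eq]; exact h2
    have h5 : t ∈ {t : ↥(relAut (fun a b : ↥A₀ => (a : P) ≤ (b : P))) |
        ((e t : ↥(relAut (fun a b : P => a ≤ b))) : Equiv.Perm P) z = z} := by
      rw [← hs1eq]; exact h4
    exact h5
  -- genericity: a moved point avoiding finitely many up-sets and down-sets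
  have l2' : ∀ (k : ℕ) (U V : List P), ∃ w : P, Hm k w ≠ w ∧
      (∀ u ∈ U, ¬ (u ≤ w)) ∧ (∀ v ∈ V, ¬ (w ≤ v)) := by
    intro k U V
    obtain ⟨a, ha⟩ := hmoved k
    have hba : ¬ (Hm k a ≤ a) := by
      intro h
      have h2 : Hm k (Hm k a) ≤ Hm k a := (hmono k _ _).mpr h
      rw [hinvol] at h2
      exact ha (le_antisymm h h2)
    -- stage 1 : find a moved point z with z not below any member of V
    have hX₁fin : (insert a (insert (Hm k a) {x | x ∈ V}) : Set P).Finite :=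
      ((List.finite_toSet V).insert (Hm k a)).insert a
    have hX₁κ : #(insert a (insert (Hm k a) {x | x ∈ V}) : Set P) < κ :=
      lt_trans hX₁fin.lt_aleph0 hκ
    obtain ⟨z, hz⟩ := NUA.rup hκ huniv hhom (insert a (insert (Hm k a) {x | x ∈ V}))
      {x | x ∈ (insert a (insert (Hm k a) {x | x ∈ V}) : Set P) ∧ x ≤ a} hX₁κ
      (by
        rintro x ⟨hx1, hx2⟩ y hy hyx
        exact ⟨hy, hyx.trans hx2⟩)
    have hza : a ≤ z := (hz a (Set.mem_insert _ _)).1.mpr ⟨Set.mem_insert _ _, le_refl a⟩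
    have hmz : Hm k z ≠ z := by
      intro hfix
      have h2 : Hm k a ≤ Hm k z := (hmono k a z).mpr hza
      rw [hfix] at h2
      have h3 := (hz (Hm k a) (Set.mem_insert_of_mem _ (Set.mem_insert _ _))).1.mp h2
      exact hba h3.2
    have hznv : ∀ v ∈ V, ¬ (z ≤ v) := by
      intro v hv
      exact (hz v (Set.mem_insert_of_mem _ (Set.mem_insert_of_mem _ hv))).2
    -- stage 2 : push down
    have hnzb1 : ¬ (z ≤ Hm k z) := by
      intro h
      have h2 : Hm k z ≤ Hm k (Hm k z) := (hmono k _ _).mpr h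
      rw [hinvol] at h2
      exact hmz (le_antisymm h2 h)
    have hX₂fin : (insert z (insert (Hm k z) ({x | x ∈ U} ∪ {x | x ∈ V})) : Set P).Finite :=
      (((List.finite_toSet U).union (List.finite_toSet V)).insert (Hm k z)).insert z
    have hX₂κ : #(insert z (insert (Hm k z) ({x | x ∈ U} ∪ {x | x ∈ V})) : Set P) < κ :=
      lt_trans hX₂fin.lt_aleph0 hκ
    obtain ⟨w, hw⟩ := NUA.rdown hκ huniv hhom
      (insert z (insert (Hm k z) ({x | x ∈ U} ∪ {x | x ∈ V})))
      {x | x ∈ (insert z (insert (Hm k z) ({x | x ∈ U} ∪ {x | x ∈ V})) : Set P) ∧ z ≤ x} hX₂κ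
      (by
        rintro x ⟨hx1, hx2⟩ y hy hxy
        exact ⟨hy, hx2.trans hxy⟩)
    have hwz : w ≤ z := (hw z (Set.mem_insert _ _)).1.mpr ⟨Set.mem_insert _ _, le_refl z⟩
    refine ⟨w, ?_, ?_, ?_⟩
    · intro hfix
      have h2 : Hm k w ≤ Hm k z := (hmono k w z).mpr hwz
      rw [hfix] at h2
      have h3 := (hw (Hm k z) (Set.mem_insert_of_mem _ (Set.mem_insert _ _))).1.mp h2
      exact hnzb1 h3.2
    · intro u hu
      exact (hw u (Set.mem_insert_of_mem _ (Set.mem_insert_of_mem _ (Or.inl hu)))).2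
    · intro v hv h
      have h2 := (hw v (Set.mem_insert_of_mem _ (Set.mem_insert_of_mem _ (Or.inr hv)))).1.mp h
      exact hznv v hv h2.2
  -- the recursive construction of the pairs (w k, Hm k (w k))
  set step : ℕ → List P → P := fun n prev =>
    Classical.choose (l2' n (prev.map (Hm n)) (prev.mapIdx (fun i x => Hm i x))) with hstepdef
  set w : ℕ → P := fun k => step k (NUA.seqP step k) with hwdef
  have spec : ∀ k : ℕ, Hm k (w k) ≠ w k ∧
      (∀ u ∈ (NUA.seqP step k).map (Hm k), ¬ (u ≤ w k)) ∧
      (∀ x ∈ (NUA.seqP step k).mapIdx (fun i x => Hm i x), ¬ (w k ≤ x)) := by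
    intro k
    exact Classical.choose_spec
      (l2' k ((NUA.seqP step k).map (Hm k)) ((NUA.seqP step k).mapIdx (fun i x => Hm i x)))
  have hget : ∀ (m k : ℕ) (hk : k < (NUA.seqP step m).length), (NUA.seqP step m)[k] = w k := by
    intro m k hk
    have hk' : k < m := by rwa [NUA.seqP_len] at hk
    have hpre := NUA.seqP_prefix step (show k+1 ≤ m from hk')
    have h2 := hpre.getElem (show k < (NUA.seqP step (k+1)).length by
      rw [NUA.seqP_len]; omega)
    rw [← h2]
    exact List.getElem_concat_length (NUA.seqP_len step k).symm _
  -- no w i is ever below any Hm k (w k)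
  have pairs : ∀ i k : ℕ, ¬ (w i ≤ Hm k (w k)) := by
    intro i k hle
    rcases lt_trichotomy i k with h | h | h
    · have hidx : i < (NUA.seqP step k).length := by rw [NUA.seqP_len]; exact h
      have hmem : Hm k (w i) ∈ (NUA.seqP step k).map (Hm k) := by
        refine List.mem_map.mpr ⟨(NUA.seqP step k)[i], List.getElem_mem hidx, ?_⟩
        rw [hget k i hidx]
      have hnot := (spec k).2.1 _ hmem
      have h2 : Hm k (w i) ≤ Hm k (Hm k (w k)) := (hmono k _ _).mpr hle
      rw [hinvol] at h2
      exact hnot h2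
    · subst h
      have h2 : Hm i (w i) ≤ Hm i (Hm i (w i)) := (hmono i _ _).mpr hle
      rw [hinvol] at h2
      exact (spec i).1 (le_antisymm h2 hle)
    · have hidx : k < (NUA.seqP step i).length := by rw [NUA.seqP_len]; exact h
      have hmem : Hm k (w k) ∈ (NUA.seqP step i).mapIdx (fun j x => Hm j x) := by
        have hlen2 : k < ((NUA.seqP step i).mapIdx (fun j x => Hm j x)).length := by
          simpa using hidx
        have h3 := List.getElem_mem hlen2
        rw [List.getElem_mapIdx] at h3
        rw [hget i k hidx] at h3
        exact h3
      exact (spec i).2.2 _ hmem hle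
  -- the generic lower bound z
  have hXscnt : #(Set.range w ∪ Set.range (fun k => Hm k (w k)) : Set P) < κ :=
    lt_of_le_of_lt (((Set.countable_range w).union (Set.countable_range _)).le_aleph0) hκ
  obtain ⟨z, hzf⟩ := NUA.rdown hκ huniv hhom
    (Set.range w ∪ Set.range (fun k => Hm k (w k)))
    {x | x ∈ (Set.range w ∪ Set.range (fun k => Hm k (w k)) : Set P) ∧ ∃ i, w i ≤ x} hXscnt
    (by
      rintro x ⟨hx1, i, hi⟩ y hy hxy
      exact ⟨hy, i, hi.trans hxy⟩)
  have hzw : ∀ k, z ≤ w k := by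
    intro k
    exact (hzf (w k) (Or.inl ⟨k, rfl⟩)).1.mpr ⟨Or.inl ⟨k, rfl⟩, ⟨k, le_refl _⟩⟩
  have hznv : ∀ k, ¬ (z ≤ Hm k (w k)) := by
    intro k h
    obtain ⟨-, i, hi⟩ := (hzf (Hm k (w k)) (Or.inr ⟨k, rfl⟩)).1.mp h
    exact pairs i k hi
  -- continuity at z, and the final contradiction
  obtain ⟨uF, huF⟩ := cont0 z
  have hSfin : (xh ⁻¹' ↑uF : Set ℕ).Finite := uF.finite_toSet.preimage xhinj.injOn
  obtain ⟨M, hM⟩ := hSfin.bddAbove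
  have h2k : xh (2*(M+1)) ∉ uF := by
    intro hc
    have := hM (show 2*(M+1) ∈ xh ⁻¹' ↑uF from hc)
    omega
  have h2k1 : xh (2*(M+1)+1) ∉ uF := by
    intro hc
    have := hM (show 2*(M+1)+1 ∈ xh ⁻¹' ↑uF from hc)
    omega
  have hfix : ∀ a ∈ uF, ((τ (M+1) : ↥(relAut (fun a b : ↥A₀ => (a : P) ≤ (b : P)))) :
      Equiv.Perm ↥A₀) a = a := by
    intro a haF
    show Equiv.swap (xh (2*(M+1))) (xh (2*(M+1)+1)) a = a
    apply Equiv.swap_apply_of_ne_of_ne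
    · intro hc; rw [hc] at haF; exact h2k haF
    · intro hc; rw [hc] at haF; exact h2k1 haF
  have hz2 : Hm (M+1) z = z := huF (τ (M+1)) hfix
  have h3 : Hm (M+1) z ≤ Hm (M+1) (w (M+1)) := (hmono (M+1) z (w (M+1))).mpr (hzw (M+1))
  rw [hz2] at h3
  exact hznv (M+1) h3
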